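/- arXiv:0903.4555 — 2 statements merged into one kernel-verified Lean document; each statement's English description precedes it below -/
import Mathlib

section
/- For 1 ≤ p < ∞ and s > 0, the map h_p^(s) : ℓ^p → ℓ^p is continuous. -/
open scoped ENNReal
open Filter Topology

noncomputable def lpTail (p : ℝ≥0∞) (x : ℕ → ℂ) (n : ℕ) : ℝ :=
  ∑' k : ℕ, ‖x (n + k)‖ ^ p.toReal

noncomputable def hMap (p : ℝ≥0∞) (s : ℝ) (x : ℕ → ℂ) (n : ℕ) : ℂ :=
  if x n = 0 then 0
  else (x n / ‖x n‖) *
    ((((lpTail p x n) ^ s - (lpTail p x (n + 1)) ^ s) ^ (1 / p.toReal) : ℝ) : ℂ)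

section aux
variable {p : ℝ≥0∞} [Fact (1 ≤ p)] (hp : p ≠ ∞)
include hp

lemma one_le_q : 1 ≤ p.toReal := by
  have h := ENNReal.toReal_mono hp (Fact.out : 1 ≤ p)
  simpa using h

lemma q_pos : 0 < p.toReal := lt_of_lt_of_le one_pos (one_le_q hp)

lemma summable_q (x : lp (fun _ : ℕ => ℂ) p) :
    Summable fun n => ‖(x : ℕ → ℂ) n‖ ^ p.toReal :=
  (lp.memℓp x).summable (q_pos hp)

lemma lpTail_eq (x : lp (fun _ : ℕ => ℂ) p) (n : ℕ) :
    lpTail p x n = (∑' k, ‖(x : ℕ → ℂ) k‖ ^ p.toReal)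
      - ∑ j ∈ Finset.range n, ‖(x : ℕ → ℂ) j‖ ^ p.toReal := by
  have h := Summable.sum_add_tsum_nat_add (f := fun k => ‖(x : ℕ → ℂ) k‖ ^ p.toReal) n
    (summable_q hp x)
  have : lpTail p x n = ∑' k, ‖(x : ℕ → ℂ) (k + n)‖ ^ p.toReal := by
    unfold lpTail
    exact tsum_congr fun k => by rw [Nat.add_comm]
  rw [this]
  linarith

lemma lpTail_succ (x : lp (fun _ : ℕ => ℂ) p) (n : ℕ) :
    lpTail p x n = ‖(x : ℕ → ℂ) n‖ ^ p.toReal + lpTail p x (n + 1) := by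
  rw [lpTail_eq hp x n, lpTail_eq hp x (n+1), Finset.sum_range_succ]
  ring

omit [Fact (1 ≤ p)] hp in
lemma lpTail_nonneg (x : ℕ → ℂ) (n : ℕ) : 0 ≤ lpTail p x n :=
  tsum_nonneg fun k => Real.rpow_nonneg (norm_nonneg _) _

lemma lpTail_succ_le (x : lp (fun _ : ℕ => ℂ) p) (n : ℕ) :
    lpTail p x (n + 1) ≤ lpTail p x n := by
  rw [lpTail_succ hp x n]
  have := Real.rpow_nonneg (norm_nonneg ((x : ℕ → ℂ) n)) p.toReal
  linarith

lemma rpow_s_le (x : lp (fun _ : ℕ => ℂ) p) (n : ℕ) {s : ℝ} (hs : 0 < s) :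
    lpTail p x (n + 1) ^ s ≤ lpTail p x n ^ s :=
  Real.rpow_le_rpow (lpTail_nonneg _ _) (lpTail_succ_le hp x n) hs.le

lemma norm_hMap (x : lp (fun _ : ℕ => ℂ) p) (n : ℕ) {s : ℝ} (hs : 0 < s) :
    ‖hMap p s x n‖ = (lpTail p x n ^ s - lpTail p x (n + 1) ^ s) ^ (1 / p.toReal) := by
  unfold hMap
  by_cases h : (x : ℕ → ℂ) n = 0
  · rw [if_pos h]
    have h0 : lpTail p (x : ℕ → ℂ) n = lpTail p (x : ℕ → ℂ) (n + 1) := by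
      rw [lpTail_succ hp x n, h]
      simp [Real.zero_rpow (q_pos hp).ne']
    rw [h0, sub_self, Real.zero_rpow (by have := q_pos hp; positivity : (1 / p.toReal : ℝ) ≠ 0)]
    simp
  · rw [if_neg h]
    have hd : 0 ≤ lpTail p (x : ℕ → ℂ) n ^ s - lpTail p (x : ℕ → ℂ) (n + 1) ^ s :=
      sub_nonneg.mpr (rpow_s_le hp x n hs)
    rw [norm_mul]
    have h1 : ‖(x : ℕ → ℂ) n / (‖(x : ℕ → ℂ) n‖ : ℂ)‖ = 1 := by
      rw [norm_div, Complex.norm_real, norm_norm, div_self (norm_ne_zero_iff.mpr h)]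
    rw [h1, one_mul, Complex.norm_real, Real.norm_of_nonneg (Real.rpow_nonneg hd _)]

lemma norm_hMap_rpow (x : lp (fun _ : ℕ => ℂ) p) (n : ℕ) {s : ℝ} (hs : 0 < s) :
    ‖hMap p s x n‖ ^ p.toReal = lpTail p x n ^ s - lpTail p x (n + 1) ^ s := by
  rw [norm_hMap hp x n hs]
  have hd : 0 ≤ lpTail p (x : ℕ → ℂ) n ^ s - lpTail p (x : ℕ → ℂ) (n + 1) ^ s :=
    sub_nonneg.mpr (rpow_s_le hp x n hs)
  rw [← Real.rpow_mul hd, one_div_mul_cancel (q_pos hp).ne', Real.rpow_one]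

lemma tendsto_lpTail_atTop (x : lp (fun _ : ℕ => ℂ) p) :
    Tendsto (fun n => lpTail p x n) atTop (𝓝 0) := by
  have h := (summable_q hp x).hasSum.tendsto_sum_nat
  have : (fun n => lpTail p (x : ℕ → ℂ) n)
      = fun n => (∑' k, ‖(x : ℕ → ℂ) k‖ ^ p.toReal) - ∑ j ∈ Finset.range n, ‖(x : ℕ → ℂ) j‖ ^ p.toReal :=
    funext fun n => lpTail_eq hp x n
  rw [this]
  have h2 := (tendsto_const_nhds (x := ∑' k, ‖(x : ℕ → ℂ) k‖ ^ p.toReal)).sub h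
  simpa using h2

lemma hasSum_norm_hMap (x : lp (fun _ : ℕ => ℂ) p) {s : ℝ} (hs : 0 < s) :
    HasSum (fun n => ‖hMap p s x n‖ ^ p.toReal) (lpTail p x 0 ^ s) := by
  rw [hasSum_iff_tendsto_nat_of_nonneg
    (fun n => Real.rpow_nonneg (norm_nonneg _) _)]
  have key : ∀ N, ∑ n ∈ Finset.range N, ‖hMap p s x n‖ ^ p.toReal
      = lpTail p x 0 ^ s - lpTail p x N ^ s := by
    intro N
    rw [Finset.sum_congr rfl fun n _ => norm_hMap_rpow hp x n hs]
    exact Finset.sum_range_sub' (fun n => lpTail p (x : ℕ → ℂ) n ^ s) N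
  simp_rw [key]
  have h2 : Tendsto (fun N => lpTail p (x : ℕ → ℂ) N ^ s) atTop (𝓝 0) := by
    have hc : ContinuousAt (fun t : ℝ => t ^ s) 0 :=
      Real.continuousAt_rpow_const 0 s (Or.inr hs.le)
    have := hc.tendsto.comp (tendsto_lpTail_atTop hp x)
    simpa [Real.zero_rpow hs.ne', Function.comp_def] using this
  simpa using (tendsto_const_nhds.sub h2)

lemma lpTail_zero (x : lp (fun _ : ℕ => ℂ) p) :
    lpTail p x 0 = ‖x‖ ^ p.toReal := by
  rw [lpTail_eq hp x 0, lp.norm_rpow_eq_tsum (q_pos hp) x]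
  simp

lemma norm_H {s : ℝ} (hs : 0 < s)
    (H : lp (fun _ : ℕ => ℂ) p → lp (fun _ : ℕ => ℂ) p)
    (hH : ∀ (x : lp (fun _ : ℕ => ℂ) p) (n : ℕ), (H x : ℕ → ℂ) n = hMap p s x n)
    (x : lp (fun _ : ℕ => ℂ) p) : ‖H x‖ = ‖x‖ ^ s := by
  have h1 : ‖H x‖ ^ p.toReal = lpTail p x 0 ^ s := by
    rw [lp.norm_rpow_eq_tsum (q_pos hp) (H x)]
    have := (hasSum_norm_hMap hp x hs).tsum_eq
    rw [← this]
    exact tsum_congr fun n => by rw [hH x n]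
  have h2 : ‖H x‖ ^ p.toReal = (‖x‖ ^ s) ^ p.toReal := by
    rw [h1, lpTail_zero hp x,
      ← Real.rpow_mul (norm_nonneg x), ← Real.rpow_mul (norm_nonneg x), mul_comm]
  have hq := q_pos hp
  have := congrArg (fun t : ℝ => t ^ (1 / p.toReal)) h2
  simpa [← Real.rpow_mul (norm_nonneg (H x)), ← Real.rpow_mul (Real.rpow_nonneg (norm_nonneg x) s),
    mul_one_div_cancel hq.ne', mul_inv_cancel₀ hq.ne'] using this

-- coordinate convergence
lemma tendsto_coord {u : ℕ → lp (fun _ : ℕ => ℂ) p} {a : lp (fun _ : ℕ => ℂ) p}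
    (hu : Tendsto u atTop (𝓝 a)) (n : ℕ) :
    Tendsto (fun k => (u k : ℕ → ℂ) n) atTop (𝓝 ((a : ℕ → ℂ) n)) := by
  rw [tendsto_iff_norm_sub_tendsto_zero]
  have hb : ∀ k, ‖(u k : ℕ → ℂ) n - (a : ℕ → ℂ) n‖ ≤ ‖u k - a‖ := by
    intro k
    have := lp.norm_apply_le_norm ((zero_lt_one.trans_le (Fact.out : 1 ≤ p)).ne') (u k - a) n
    simpa [lp.coeFn_sub] using this
  have h0 : Tendsto (fun k => ‖u k - a‖) atTop (𝓝 0) := by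
    rw [← tendsto_iff_norm_sub_tendsto_zero]; exact hu
  exact squeeze_zero (fun k => norm_nonneg _) hb h0

lemma tendsto_lpTail {u : ℕ → lp (fun _ : ℕ => ℂ) p} {a : lp (fun _ : ℕ => ℂ) p}
    (hptw : ∀ n, Tendsto (fun k => (u k : ℕ → ℂ) n) atTop (𝓝 ((a : ℕ → ℂ) n)))
    (hnrm : Tendsto (fun k => ‖u k‖) atTop (𝓝 ‖a‖)) (n : ℕ) :
    Tendsto (fun k => lpTail p (u k) n) atTop (𝓝 (lpTail p a n)) := by
  simp_rw [lpTail_eq hp _ n]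
  have hnorm : Tendsto (fun k => (∑' m, ‖(u k : ℕ → ℂ) m‖ ^ p.toReal)) atTop
      (𝓝 (∑' m, ‖(a : ℕ → ℂ) m‖ ^ p.toReal)) := by
    simp_rw [← lp.norm_rpow_eq_tsum (q_pos hp)]
    exact ((Real.continuousAt_rpow_const _ _ (Or.inr (q_pos hp).le)).tendsto).comp hnrm
  have hsum : Tendsto (fun k => ∑ j ∈ Finset.range n, ‖(u k : ℕ → ℂ) j‖ ^ p.toReal) atTop
      (𝓝 (∑ j ∈ Finset.range n, ‖(a : ℕ → ℂ) j‖ ^ p.toReal)) := by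
    refine tendsto_finset_sum _ fun j _ => ?_
    exact ((Real.continuousAt_rpow_const _ _ (Or.inr (q_pos hp).le)).tendsto).comp
      ((continuous_norm.tendsto _).comp (hptw j))
  exact hnorm.sub hsum

lemma tendsto_hMap_coord {u : ℕ → lp (fun _ : ℕ => ℂ) p} {a : lp (fun _ : ℕ => ℂ) p}
    (hu : Tendsto u atTop (𝓝 a)) {s : ℝ} (hs : 0 < s) (n : ℕ) :
    Tendsto (fun k => hMap p s (u k) n) atTop (𝓝 (hMap p s a n)) := by
  have hptw : ∀ m, Tendsto (fun k => (u k : ℕ → ℂ) m) atTop (𝓝 ((a : ℕ → ℂ) m)) :=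
    fun m => tendsto_coord hp hu m
  have hnrm : Tendsto (fun k => ‖u k‖) atTop (𝓝 ‖a‖) := (continuous_norm.tendsto a).comp hu
  have hT0 := tendsto_lpTail hp hptw hnrm n
  have hT1 := tendsto_lpTail hp hptw hnrm (n + 1)
  have hrs : ∀ (t : ℝ), ContinuousAt (fun t : ℝ => t ^ s) t := fun t =>
    Real.continuousAt_rpow_const t s (Or.inr hs.le)
  have hdiff : Tendsto (fun k => lpTail p (u k : ℕ → ℂ) n ^ s - lpTail p (u k : ℕ → ℂ) (n+1) ^ s)
      atTop (𝓝 (lpTail p (a : ℕ → ℂ) n ^ s - lpTail p (a : ℕ → ℂ) (n+1) ^ s)) :=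
    ((hrs _).tendsto.comp hT0).sub ((hrs _).tendsto.comp hT1)
  by_cases h : (a : ℕ → ℂ) n = 0
  · -- target is 0; show norms tend to 0
    have heq : hMap p s (a : ℕ → ℂ) n = 0 := by unfold hMap; rw [if_pos h]
    rw [heq, tendsto_zero_iff_norm_tendsto_zero]
    have hnorm : ∀ k, ‖hMap p s (u k : ℕ → ℂ) n‖
        = (lpTail p (u k : ℕ → ℂ) n ^ s - lpTail p (u k : ℕ → ℂ) (n+1) ^ s) ^ (1 / p.toReal) :=
      fun k => norm_hMap hp (u k) n hs
    simp_rw [hnorm]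
    have h0 : lpTail p (a : ℕ → ℂ) n ^ s - lpTail p (a : ℕ → ℂ) (n+1) ^ s = 0 := by
      have := lpTail_succ hp a n
      rw [h] at this
      simp only [norm_zero, Real.zero_rpow (q_pos hp).ne', zero_add] at this
      rw [this, sub_self]
    rw [h0] at hdiff
    have hc : ContinuousAt (fun t : ℝ => t ^ (1 / p.toReal)) 0 :=
      Real.continuousAt_rpow_const 0 _ (Or.inr (by have := q_pos hp; positivity))
    have := hc.tendsto.comp hdiff
    simpa [Function.comp_def, one_div,
      Real.zero_rpow (show p.toReal⁻¹ ≠ 0 by have := q_pos hp; positivity)] using this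
  · -- eventually nonzero
    have hco := tendsto_coord hp hu n
    have hev : ∀ᶠ k in atTop, (u k : ℕ → ℂ) n ≠ 0 := hco.eventually_ne h
    have hbpos : 0 < lpTail p (a : ℕ → ℂ) n ^ s - lpTail p (a : ℕ → ℂ) (n+1) ^ s := by
      have hlt : lpTail p (a : ℕ → ℂ) (n+1) < lpTail p (a : ℕ → ℂ) n := by
        rw [lpTail_succ hp a n]
        have : (0:ℝ) < ‖(a : ℕ → ℂ) n‖ ^ p.toReal :=
          Real.rpow_pos_of_pos (norm_pos_iff.mpr h) _
        linarith
      have := Real.rpow_lt_rpow (lpTail_nonneg _ _) hlt hs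
      linarith
    have hg : Tendsto (fun k => ((u k : ℕ → ℂ) n / (‖(u k : ℕ → ℂ) n‖ : ℂ)) *
        (((lpTail p (u k : ℕ → ℂ) n ^ s - lpTail p (u k : ℕ → ℂ) (n+1) ^ s) ^ (1 / p.toReal) : ℝ) : ℂ))
        atTop (𝓝 (((a : ℕ → ℂ) n / (‖(a : ℕ → ℂ) n‖ : ℂ)) *
        (((lpTail p (a : ℕ → ℂ) n ^ s - lpTail p (a : ℕ → ℂ) (n+1) ^ s) ^ (1 / p.toReal) : ℝ) : ℂ))) := by
      apply Tendsto.mul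
      · apply Tendsto.div hco
        · exact Complex.continuous_ofReal.tendsto _ |>.comp ((continuous_norm.tendsto _).comp hco)
        · simpa using norm_ne_zero_iff.mpr h
      · apply (Complex.continuous_ofReal.tendsto _).comp
        have hc : ContinuousAt (fun t : ℝ => t ^ (1 / p.toReal))
            (lpTail p (a : ℕ → ℂ) n ^ s - lpTail p (a : ℕ → ℂ) (n+1) ^ s) :=
          Real.continuousAt_rpow_const _ _ (Or.inl hbpos.ne')
        exact hc.tendsto.comp hdiff
    have : hMap p s (a : ℕ → ℂ) n = ((a : ℕ → ℂ) n / (‖(a : ℕ → ℂ) n‖ : ℂ)) *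
        (((lpTail p (a : ℕ → ℂ) n ^ s - lpTail p (a : ℕ → ℂ) (n+1) ^ s) ^ (1 / p.toReal) : ℝ) : ℂ) := by
      unfold hMap; rw [if_neg h]
    rw [this]
    refine hg.congr' ?_
    filter_upwards [hev] with k hk
    unfold hMap; rw [if_neg hk]

omit [Fact (1 ≤ p)] hp in
lemma norm_sub_rpow_le {q : ℝ} (hq : 0 ≤ q) (a b : ℂ) :
    ‖a - b‖ ^ q ≤ 2 ^ q * (‖a‖ ^ q + ‖b‖ ^ q) := by
  have h1 : ‖a - b‖ ≤ 2 * max ‖a‖ ‖b‖ := by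
    calc ‖a - b‖ ≤ ‖a‖ + ‖b‖ := norm_sub_le a b
      _ ≤ 2 * max ‖a‖ ‖b‖ := by
          have := le_max_left ‖a‖ ‖b‖
          have := le_max_right ‖a‖ ‖b‖
          linarith
  calc ‖a - b‖ ^ q ≤ (2 * max ‖a‖ ‖b‖) ^ q := Real.rpow_le_rpow (norm_nonneg _) h1 hq
    _ = 2 ^ q * max ‖a‖ ‖b‖ ^ q := Real.mul_rpow (by norm_num) (le_max_of_le_left (norm_nonneg _))
    _ ≤ 2 ^ q * (‖a‖ ^ q + ‖b‖ ^ q) := by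
        gcongr
        rcases max_cases ‖a‖ ‖b‖ with ⟨h, _⟩ | ⟨h, _⟩ <;> rw [h]
        · have := Real.rpow_nonneg (norm_nonneg b) q; linarith
        · have := Real.rpow_nonneg (norm_nonneg a) q; linarith

set_option maxHeartbeats 1000000 in
lemma tendsto_lp_of_pointwise {u : ℕ → lp (fun _ : ℕ => ℂ) p} {a : lp (fun _ : ℕ => ℂ) p}
    (hptw : ∀ n, Tendsto (fun k => (u k : ℕ → ℂ) n) atTop (𝓝 ((a : ℕ → ℂ) n)))
    (hnorm : Tendsto (fun k => ‖u k‖) atTop (𝓝 ‖a‖)) :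
    Tendsto u atTop (𝓝 a) := by
  have hq := q_pos hp
  -- reduce to convergence of q-th powers of norms
  suffices hQ : Tendsto (fun k => ‖u k - a‖ ^ p.toReal) atTop (𝓝 0) by
    rw [tendsto_iff_norm_sub_tendsto_zero]
    have hc : ContinuousAt (fun t : ℝ => t ^ (1 / p.toReal)) 0 :=
      Real.continuousAt_rpow_const 0 _ (Or.inr (by positivity))
    have h2 := hc.tendsto.comp hQ
    have h3 : (fun k => (‖u k - a‖ ^ p.toReal) ^ (1 / p.toReal)) = fun k => ‖u k - a‖ := by
      funext k
      rw [← Real.rpow_mul (norm_nonneg _), mul_one_div_cancel hq.ne', Real.rpow_one]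
    simp only [Function.comp_def] at h2
    rw [h3] at h2
    simpa [one_div, Real.zero_rpow (show p.toReal⁻¹ ≠ 0 by positivity)] using h2
  rw [Metric.tendsto_atTop]
  intro ε hε
  set C : ℝ := 2 ^ p.toReal with hC
  have hCpos : 0 < C := Real.rpow_pos_of_pos (by norm_num) _
  set δ : ℝ := ε / (2 + 4 * C) with hδ
  have hδpos : 0 < δ := by positivity
  -- choose N with tail of a < δ
  have hA := (summable_q hp a).hasSum.tendsto_sum_nat
  have hAev : ∀ᶠ N in atTop, (∑' m, ‖(a : ℕ → ℂ) m‖ ^ p.toReal) - δ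
      < ∑ j ∈ Finset.range N, ‖(a : ℕ → ℂ) j‖ ^ p.toReal :=
    hA.eventually (eventually_gt_nhds (by linarith))
  obtain ⟨N, hN⟩ := hAev.exists
  have htail_a : lpTail p a N < δ := by
    rw [lpTail_eq hp a N]; linarith
  -- eventually tail of u k < δ
  have htails : Tendsto (fun k => lpTail p (u k : ℕ → ℂ) N) atTop (𝓝 (lpTail p (a : ℕ → ℂ) N)) :=
    tendsto_lpTail hp hptw hnorm N
  have hev1 : ∀ᶠ k in atTop, lpTail p (u k : ℕ → ℂ) N < δ :=
    htails.eventually (eventually_lt_nhds htail_a)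
  have hhead : Tendsto (fun k => ∑ j ∈ Finset.range N, ‖(u k : ℕ → ℂ) j - (a : ℕ → ℂ) j‖ ^ p.toReal)
      atTop (𝓝 0) := by
    have : ∀ j, Tendsto (fun k => ‖(u k : ℕ → ℂ) j - (a : ℕ → ℂ) j‖ ^ p.toReal) atTop (𝓝 0) := by
      intro j
      have h1 : Tendsto (fun k => (u k : ℕ → ℂ) j - (a : ℕ → ℂ) j) atTop (𝓝 0) := by
        simpa using (hptw j).sub (tendsto_const_nhds (x := (a : ℕ → ℂ) j))
      have h2 : Tendsto (fun k => ‖(u k : ℕ → ℂ) j - (a : ℕ → ℂ) j‖) atTop (𝓝 0) := by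
        simpa [Function.comp_def] using (continuous_norm.tendsto (0 : ℂ)).comp h1
      have hc : ContinuousAt (fun t : ℝ => t ^ p.toReal) 0 :=
        Real.continuousAt_rpow_const 0 _ (Or.inr hq.le)
      have := hc.tendsto.comp h2
      simpa [Real.zero_rpow hq.ne', Function.comp_def] using this
    have := tendsto_finset_sum (Finset.range N) (fun j _ => this j)
    simpa using this
  have hev2 : ∀ᶠ k in atTop, (∑ j ∈ Finset.range N, ‖(u k : ℕ → ℂ) j - (a : ℕ → ℂ) j‖ ^ p.toReal) < δ :=
    hhead.eventually (eventually_lt_nhds hδpos)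
  obtain ⟨K, hK⟩ := (hev1.and hev2).exists_forall_of_atTop
  refine ⟨K, fun k hk => ?_⟩
  obtain ⟨hk1, hk2⟩ := hK k hk
  have hfuk : ∀ j, ((u k - a : lp (fun _ : ℕ => ℂ) p) : ℕ → ℂ) j
      = (u k : ℕ → ℂ) j - (a : ℕ → ℂ) j := fun j => by rw [lp.coeFn_sub]; rfl
  have hsum_diff : Summable fun j => ‖(u k : ℕ → ℂ) j - (a : ℕ → ℂ) j‖ ^ p.toReal := by
    have := summable_q hp (u k - a)
    simpa [hfuk] using this
  have hsum_u : Summable fun j => ‖(u k : ℕ → ℂ) j‖ ^ p.toReal := summable_q hp (u k)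
  have hsum_a : Summable fun j => ‖(a : ℕ → ℂ) j‖ ^ p.toReal := summable_q hp a
  have hsplit := Summable.sum_add_tsum_nat_add
    (f := fun j => ‖(u k : ℕ → ℂ) j - (a : ℕ → ℂ) j‖ ^ p.toReal) N hsum_diff
  have hnorm_eq : ‖u k - a‖ ^ p.toReal
      = ∑' j, ‖(u k : ℕ → ℂ) j - (a : ℕ → ℂ) j‖ ^ p.toReal := by
    rw [lp.norm_rpow_eq_tsum hq (u k - a)]
    exact tsum_congr fun j => by rw [hfuk]
  -- tail estimate
  have hts_u : Summable fun j => ‖(u k : ℕ → ℂ) (j + N)‖ ^ p.toReal :=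
    (summable_nat_add_iff N).mpr hsum_u
  have hts_a : Summable fun j => ‖(a : ℕ → ℂ) (j + N)‖ ^ p.toReal :=
    (summable_nat_add_iff N).mpr hsum_a
  have hts_d : Summable fun j => ‖(u k : ℕ → ℂ) (j + N) - (a : ℕ → ℂ) (j + N)‖ ^ p.toReal :=
    (summable_nat_add_iff N).mpr hsum_diff
  have htail_le : (∑' j, ‖(u k : ℕ → ℂ) (j + N) - (a : ℕ → ℂ) (j + N)‖ ^ p.toReal)
      ≤ C * (lpTail p (u k : ℕ → ℂ) N + lpTail p (a : ℕ → ℂ) N) := by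
    have hle := Summable.tsum_le_tsum (f := fun j => ‖(u k : ℕ → ℂ) (j + N) - (a : ℕ → ℂ) (j + N)‖ ^ p.toReal)
      (g := fun j => C * (‖(u k : ℕ → ℂ) (j + N)‖ ^ p.toReal + ‖(a : ℕ → ℂ) (j + N)‖ ^ p.toReal))
      (fun j => norm_sub_rpow_le hq.le _ _) hts_d ((hts_u.add hts_a).mul_left C)
    have heq : (∑' j, C * (‖(u k : ℕ → ℂ) (j + N)‖ ^ p.toReal + ‖(a : ℕ → ℂ) (j + N)‖ ^ p.toReal))
        = C * (lpTail p (u k : ℕ → ℂ) N + lpTail p (a : ℕ → ℂ) N) := by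
      rw [tsum_mul_left, Summable.tsum_add hts_u hts_a]
      congr 1
      · congr 1
        · exact tsum_congr fun j => by rw [Nat.add_comm]
        · exact tsum_congr fun j => by rw [Nat.add_comm]
    rw [heq] at hle
    exact hle
  have hfk : ‖u k - a‖ ^ p.toReal
      ≤ (∑ j ∈ Finset.range N, ‖(u k : ℕ → ℂ) j - (a : ℕ → ℂ) j‖ ^ p.toReal)
        + C * (lpTail p (u k : ℕ → ℂ) N + lpTail p (a : ℕ → ℂ) N) := by
    rw [hnorm_eq, ← hsplit]
    have := htail_le
    linarith
  have hlt : ‖u k - a‖ ^ p.toReal < δ + C * (δ + δ) := by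
    have h1 : C * (lpTail p (u k : ℕ → ℂ) N + lpTail p (a : ℕ → ℂ) N) ≤ C * (δ + δ) := by
      have h0 := lpTail_nonneg (p := p) (u k : ℕ → ℂ) N
      have h0' := lpTail_nonneg (p := p) (a : ℕ → ℂ) N
      have := hk1
      nlinarith
    linarith
  have hfin : δ + C * (δ + δ) ≤ ε := by
    have hmul : δ * (2 + 4 * C) = ε := div_mul_cancel₀ _ (by positivity)
    nlinarith [hδpos.le, hCpos.le]
  rw [Real.dist_eq, sub_zero, abs_of_nonneg (Real.rpow_nonneg (norm_nonneg _) _)]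
  linarith

end aux

set_option synthInstance.maxHeartbeats 400000 in
/-- `h_p^(s) : ℓ^p → ℓ^p` is continuous. -/
theorem hMap_continuous (p : ℝ≥0∞) [Fact (1 ≤ p)] (hp : p ≠ ∞) (s : ℝ) (hs : 0 < s)
    (H : lp (fun _ : ℕ => ℂ) p → lp (fun _ : ℕ => ℂ) p)
    (hH : ∀ (x : lp (fun _ : ℕ => ℂ) p) (n : ℕ), (H x : ℕ → ℂ) n = hMap p s x n) :
    Continuous H := by
  rw [continuous_iff_seqContinuous]
  intro u a hu
  apply tendsto_lp_of_pointwise hp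
  · intro n
    have h := tendsto_hMap_coord hp hu hs n
    have h2 : (fun k => ((H ∘ u) k : ℕ → ℂ) n) = fun k => hMap p s (u k) n := by
      funext k; exact hH (u k) n
    rw [h2, hH a n]
    exact h
  · have h1 := (continuous_norm.tendsto a).comp hu
    have hc : ContinuousAt (fun t : ℝ => t ^ s) ‖a‖ :=
      Real.continuousAt_rpow_const _ _ (Or.inr hs.le)
    have h2 := hc.tendsto.comp h1
    have h3 : (fun k => ‖(H ∘ u) k‖) = fun k => ‖u k‖ ^ s := by
      funext k; exact norm_H hp hs H hH (u k)
    rw [h3, norm_H hp hs H hH a]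
    exact h2
end

section
/- For 1 ≤ p < ∞ and nonzero complex numbers λ, ω, the operators λB_p and ωB_p are similar (i.e., S λB_p S^{-1} = ωB_p for some bounded invertible linear operator S on ℓ^p) if and only if |λ| = |ω|. -/
open scoped ENNReal

section Aux

variable {p : ℝ≥0∞} [Fact (1 ≤ p)]

private lemma pt_pos (hp : p ≠ ∞) : 0 < p.toReal :=
  ENNReal.toReal_pos (zero_lt_one.trans_le (Fact.out : (1:ℝ≥0∞) ≤ p)).ne' hp

/-- One-step norm bound for a weighted backward shift. -/
private lemma shift_norm_le (hp : p ≠ ∞) (c : ℂ)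
    (B : lp (fun _ : ℕ => ℂ) p → lp (fun _ : ℕ => ℂ) p)
    (hB : ∀ x n, (B x : ℕ → ℂ) n = c * x (n + 1)) (x : lp (fun _ : ℕ => ℂ) p) :
    ‖B x‖ ≤ ‖c‖ * ‖x‖ := by
  have hpt := pt_pos hp
  rw [← Real.rpow_le_rpow_iff (lp.norm_nonneg' _) (by positivity) hpt,
    lp.norm_rpow_eq_tsum hpt, Real.mul_rpow (norm_nonneg c) (lp.norm_nonneg' x)]
  have hsum : Summable fun n : ℕ => ‖(x : ℕ → ℂ) n‖ ^ p.toReal :=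
    (lp.memℓp x).summable hpt
  have hsum' : Summable fun n : ℕ => ‖(x : ℕ → ℂ) (n + 1)‖ ^ p.toReal :=
    hsum.comp_injective (add_left_injective 1)
  calc ∑' n, ‖(B x : ℕ → ℂ) n‖ ^ p.toReal
      = ∑' n, ‖c‖ ^ p.toReal * ‖(x : ℕ → ℂ) (n + 1)‖ ^ p.toReal := by
        refine tsum_congr fun n => ?_
        rw [hB, norm_mul, Real.mul_rpow (norm_nonneg _) (norm_nonneg _)]
    _ = ‖c‖ ^ p.toReal * ∑' n, ‖(x : ℕ → ℂ) (n + 1)‖ ^ p.toReal := tsum_mul_left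
    _ ≤ ‖c‖ ^ p.toReal * ∑' n, ‖(x : ℕ → ℂ) n‖ ^ p.toReal := by
        refine mul_le_mul_of_nonneg_left ?_ (by positivity)
        exact Summable.tsum_le_tsum_of_inj (· + 1) (add_left_injective 1)
          (fun _ _ => by positivity) (fun n => le_rfl) hsum' hsum
    _ = ‖c‖ ^ p.toReal * ‖x‖ ^ p.toReal := by rw [lp.norm_rpow_eq_tsum hpt]

/-- Coordinates of iterates of a weighted backward shift. -/
private lemma iter_apply (c : ℂ)
    (B : lp (fun _ : ℕ => ℂ) p → lp (fun _ : ℕ => ℂ) p)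
    (hB : ∀ x n, (B x : ℕ → ℂ) n = c * x (n + 1)) :
    ∀ (m : ℕ) (x : lp (fun _ : ℕ => ℂ) p) (n : ℕ),
      (B^[m] x : ℕ → ℂ) n = c ^ m * x (n + m) := by
  intro m
  induction m with
  | zero => intro x n; simp
  | succ k ih =>
      intro x n
      rw [Function.iterate_succ_apply, ih, hB, pow_succ]
      ring

private lemma iter_norm_le (hp : p ≠ ∞) (c : ℂ)
    (B : lp (fun _ : ℕ => ℂ) p → lp (fun _ : ℕ => ℂ) p)
    (hB : ∀ x n, (B x : ℕ → ℂ) n = c * x (n + 1)) :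
    ∀ (m : ℕ) (x : lp (fun _ : ℕ => ℂ) p), ‖B^[m] x‖ ≤ ‖c‖ ^ m * ‖x‖ := by
  intro m
  induction m with
  | zero => intro x; simp
  | succ k ih =>
      intro x
      rw [Function.iterate_succ_apply]
      calc ‖B^[k] (B x)‖ ≤ ‖c‖ ^ k * ‖B x‖ := ih (B x)
        _ ≤ ‖c‖ ^ k * (‖c‖ * ‖x‖) :=
            mul_le_mul_of_nonneg_left (shift_norm_le hp c B hB x) (by positivity)
        _ = ‖c‖ ^ (k + 1) * ‖x‖ := by rw [pow_succ]; ring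

/-- The key half: a conjugacy from `lB` to `wB` forces `‖w‖ ≤ ‖l‖`. -/
private lemma norm_le_of_conj (hp : p ≠ ∞) (l w : ℂ) (hl : l ≠ 0)
    (Bl Bw : lp (fun _ : ℕ => ℂ) p → lp (fun _ : ℕ => ℂ) p)
    (hBl : ∀ (x : lp (fun _ : ℕ => ℂ) p) (n : ℕ), (Bl x : ℕ → ℂ) n = l * x (n + 1))
    (hBw : ∀ (x : lp (fun _ : ℕ => ℂ) p) (n : ℕ), (Bw x : ℕ → ℂ) n = w * x (n + 1))
    (S : lp (fun _ : ℕ => ℂ) p ≃L[ℂ] lp (fun _ : ℕ => ℂ) p)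
    (hS : ∀ x, S (Bl x) = Bw (S x)) : ‖w‖ ≤ ‖l‖ := by
  have hpt := pt_pos hp
  let E := lp (fun _ : ℕ => ℂ) p
  set C := ‖(S : E →L[ℂ] E)‖ * ‖(S.symm : E →L[ℂ] E)‖ with hC
  -- conjugacy of iterates
  have hSm : ∀ (m : ℕ) (x : E), S (Bl^[m] x) = Bw^[m] (S x) := by
    intro m
    induction m with
    | zero => intro x; simp
    | succ k ih =>
        intro x
        rw [Function.iterate_succ_apply, Function.iterate_succ_apply, ih, hS]
  have key : ∀ m : ℕ, ‖w‖ ^ m ≤ C * ‖l‖ ^ m := by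
    intro m
    set y : E := lp.single p m (1 : ℂ) with hy
    have hys : ‖y‖ = 1 := by
      have := lp.norm_single (E := fun _ : ℕ => ℂ) (zero_lt_one.trans_le (Fact.out : (1:ℝ≥0∞) ≤ p)) m (1 : ℂ)
      simpa using this
    -- Bw^[m] y = lp.single p 0 (w ^ m)
    have hcoord : Bw^[m] y = lp.single p 0 (w ^ m) := by
      apply lp.ext
      funext n
      rw [iter_apply w Bw hBw m y n]
      rcases eq_or_ne n 0 with rfl | hn
      · rw [lp.single_apply_self, hy]
        have : (lp.single p m (1:ℂ) : ℕ → ℂ) (0 + m) = 1 := by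
          simpa using lp.single_apply_self (E := fun _ : ℕ => ℂ) p m 1
        rw [this, mul_one]
      · rw [lp.single_apply_ne p 0 _ hn, hy]
        have : (lp.single p m (1:ℂ) : ℕ → ℂ) (n + m) = 0 := by
          apply lp.single_apply_ne
          omega
        rw [this, mul_zero]
    have hnorm1 : ‖Bw^[m] y‖ = ‖w‖ ^ m := by
      rw [hcoord]
      have := lp.norm_single (E := fun _ : ℕ => ℂ) (zero_lt_one.trans_le (Fact.out : (1:ℝ≥0∞) ≤ p)) 0 (w ^ m : ℂ)
      simpa [norm_pow] using this
    have hnorm2 : ‖Bw^[m] y‖ ≤ C * ‖l‖ ^ m := by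
      have h1 : Bw^[m] y = S (Bl^[m] (S.symm y)) := by
        rw [hSm m (S.symm y), S.apply_symm_apply]
      rw [h1]
      calc ‖S (Bl^[m] (S.symm y))‖
          ≤ ‖(S : E →L[ℂ] E)‖ * ‖Bl^[m] (S.symm y)‖ :=
            (S : E →L[ℂ] E).le_opNorm _
        _ ≤ ‖(S : E →L[ℂ] E)‖ * (‖l‖ ^ m * ‖S.symm y‖) := by
            refine mul_le_mul_of_nonneg_left ?_ (norm_nonneg _)
            exact iter_norm_le hp l Bl hBl m (S.symm y)
        _ ≤ ‖(S : E →L[ℂ] E)‖ * (‖l‖ ^ m * (‖(S.symm : E →L[ℂ] E)‖ * ‖y‖)) := by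
            refine mul_le_mul_of_nonneg_left ?_ (norm_nonneg _)
            refine mul_le_mul_of_nonneg_left ?_ (by positivity)
            exact (S.symm : E →L[ℂ] E).le_opNorm _
        _ = C * ‖l‖ ^ m := by rw [hC, hys]; ring
    rw [← hnorm1]; exact hnorm2
  by_contra hlt
  push_neg at hlt
  have hl0 : 0 < ‖l‖ := norm_pos_iff.2 hl
  have hr : 1 < ‖w‖ / ‖l‖ := (one_lt_div hl0).2 hlt
  obtain ⟨m, hm⟩ := pow_unbounded_of_one_lt C hr
  have : (‖w‖ / ‖l‖) ^ m ≤ C := by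
    rw [div_pow, div_le_iff₀ (by positivity)]
    exact key m
  linarith

private lemma diag_mem (hp : p ≠ ∞) (μ : ℂ) (hμ : ‖μ‖ = 1)
    (x : lp (fun _ : ℕ => ℂ) p) :
    Memℓp (fun n : ℕ => μ ^ n * (x : ℕ → ℂ) n) p := by
  apply memℓp_gen
  have : (fun n : ℕ => ‖μ ^ n * (x : ℕ → ℂ) n‖ ^ p.toReal)
      = fun n : ℕ => ‖(x : ℕ → ℂ) n‖ ^ p.toReal := by
    funext n; rw [norm_mul, norm_pow, hμ, one_pow, one_mul]
  rw [this]
  exact (lp.memℓp x).summable (pt_pos hp)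

/-- The diagonal isometry with entries `μ ^ n` for `‖μ‖ = 1`. -/
private noncomputable def diagIso (p : ℝ≥0∞) [Fact (1 ≤ p)] (hp : p ≠ ∞)
    (μ : ℂ) (hμ : ‖μ‖ = 1) :
    lp (fun _ : ℕ => ℂ) p ≃ₗᵢ[ℂ] lp (fun _ : ℕ => ℂ) p := by
  have hμ0 : μ ≠ 0 := by intro h; rw [h] at hμ; simp at hμ
  have hμi : ‖μ⁻¹‖ = 1 := by rw [norm_inv, hμ, inv_one]
  exact
  { toFun := fun x => ⟨fun n => μ ^ n * (x : ℕ → ℂ) n, diag_mem hp μ hμ x⟩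
    invFun := fun x => ⟨fun n => μ⁻¹ ^ n * (x : ℕ → ℂ) n, diag_mem hp μ⁻¹ hμi x⟩
    left_inv := fun x => by
      apply lp.ext
      funext n
      show μ⁻¹ ^ n * (μ ^ n * (x : ℕ → ℂ) n) = (x : ℕ → ℂ) n
      rw [inv_pow, inv_mul_cancel_left₀ (pow_ne_zero n hμ0)]
    right_inv := fun x => by
      apply lp.ext
      funext n
      show μ ^ n * (μ⁻¹ ^ n * (x : ℕ → ℂ) n) = (x : ℕ → ℂ) n
      rw [inv_pow, mul_inv_cancel_left₀ (pow_ne_zero n hμ0)]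
    map_add' := fun x y => by
      apply lp.ext
      funext n
      show μ ^ n * ((x + y : lp (fun _ : ℕ => ℂ) p) : ℕ → ℂ) n = _
      rw [lp.coeFn_add]
      show μ ^ n * ((x : ℕ → ℂ) n + (y : ℕ → ℂ) n)
        = μ ^ n * (x : ℕ → ℂ) n + μ ^ n * (y : ℕ → ℂ) n
      ring
    map_smul' := fun c x => by
      apply lp.ext
      funext n
      show μ ^ n * ((c • x : lp (fun _ : ℕ => ℂ) p) : ℕ → ℂ) n = _
      rw [lp.coeFn_smul]
      show μ ^ n * (c * (x : ℕ → ℂ) n) = c * (μ ^ n * (x : ℕ → ℂ) n)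
      ring
    norm_map' := fun x => by
      have hpt := pt_pos hp
      rw [lp.norm_eq_tsum_rpow hpt, lp.norm_eq_tsum_rpow hpt]
      congr 1
      refine tsum_congr fun n => ?_
      show ‖μ ^ n * (x : ℕ → ℂ) n‖ ^ p.toReal = ‖(x : ℕ → ℂ) n‖ ^ p.toReal
      rw [norm_mul, norm_pow, hμ, one_pow, one_mul] }

end Aux

/-- `λB_p` and `ωB_p` are similar (conjugate by a bounded invertible
linear operator) iff `|λ| = |ω|`. -/
theorem shifts_similar_iff_abs_eq (p : ℝ≥0∞) [Fact (1 ≤ p)] (hp : p ≠ ∞)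
    (l w : ℂ) (hl : l ≠ 0) (hw : w ≠ 0)
    (Bl Bw : lp (fun _ : ℕ => ℂ) p → lp (fun _ : ℕ => ℂ) p)
    (hBl : ∀ (x : lp (fun _ : ℕ => ℂ) p) (n : ℕ), (Bl x : ℕ → ℂ) n = l * x (n + 1))
    (hBw : ∀ (x : lp (fun _ : ℕ => ℂ) p) (n : ℕ), (Bw x : ℕ → ℂ) n = w * x (n + 1)) :
    (∃ S : lp (fun _ : ℕ => ℂ) p ≃L[ℂ] lp (fun _ : ℕ => ℂ) p,
        ∀ x, S (Bl x) = Bw (S x)) ↔ ‖l‖ = ‖w‖ := by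
  constructor
  · rintro ⟨S, hS⟩
    have h1 : ‖w‖ ≤ ‖l‖ := norm_le_of_conj hp l w hl Bl Bw hBl hBw S hS
    have hS' : ∀ y, S.symm (Bw y) = Bl (S.symm y) := by
      intro y
      have := hS (S.symm y)
      rw [S.apply_symm_apply] at this
      rw [← this, S.symm_apply_apply]
    have h2 : ‖l‖ ≤ ‖w‖ := norm_le_of_conj hp w l hw Bw Bl hBw hBl S.symm hS'
    exact le_antisymm h2 h1
  · intro h
    set μ : ℂ := l / w with hμdef
    have hμ : ‖μ‖ = 1 := by
      rw [hμdef, norm_div, h, div_self (norm_ne_zero_iff.2 hw)]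
    refine ⟨(diagIso p hp μ hμ).toContinuousLinearEquiv, fun x => ?_⟩
    apply lp.ext
    funext n
    show μ ^ n * (Bl x : ℕ → ℂ) n = (Bw ((diagIso p hp μ hμ).toContinuousLinearEquiv x) : ℕ → ℂ) n
    rw [hBl, hBw]
    show μ ^ n * (l * (x : ℕ → ℂ) (n + 1)) = w * (μ ^ (n + 1) * (x : ℕ → ℂ) (n + 1))
    rw [pow_succ, hμdef]
    field_simp
end
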